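/- If the canonical map φ_{∞,0}: X₀ → X_∞ is injective, then all maps φ_{∞,n}: X_n → X_∞ are injective (the scheme is fully injective). -/
import Mathlib


set_option linter.unusedSectionVars false
set_option linter.unusedVariables false

variable {Y : Type}

/-- Iterated embedding φ_{n,m} : X m → X n for m ≤ n. -/
def phiTo (X : ℕ → Type) (φs : ∀ n, X n → X (n + 1)) {m n : ℕ} (h : m ≤ n) (x : X m) : X n :=
  Nat.leRecOn h (fun {k} x => φs k x) x

/-- Iterated projection π_{m,q} : Yᵐ × X q → X (q+m), the head of the word acting outermost. -/
def piFin (X : ℕ → Type) (πo : ∀ n, Y → X n → X (n + 1)) :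
    ∀ (m q : ℕ), (Fin m → Y) → X q → X (q + m)
  | 0, _, _, x => x
  | m + 1, q, y, x => πo (q + m) (y 0) (piFin X πo m q (fun i => y i.succ) x)

/-- Iterated projection π_{m,0} : Yᵐ × X 0 → X m. -/
def piFin0 (X : ℕ → Type) (πo : ∀ n, Y → X n → X (n + 1)) :
    ∀ (m : ℕ), (Fin m → Y) → X 0 → X m
  | 0, _, x => x
  | m + 1, y, x => πo m (y 0) (piFin0 X πo m (fun i => y i.succ) x)

/-- The set Γ_n(x_n) ⊂ Y^ℕ : all infinite addresses y such that for every p ≥ n the point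
φ_{p,n}(x_n) lies in the cell C(y₁,…,y_p) = π_{p,0}({(y₁,…,y_p)} × X 0). -/
def Gamma (X : ℕ → Type) (φs : ∀ n, X n → X (n + 1)) (πo : ∀ n, Y → X n → X (n + 1))
    (n : ℕ) (xn : X n) : Set (ℕ → Y) :=
  { y | ∀ p, ∀ h : n ≤ p, ∃ x0 : X 0, phiTo X φs h xn = piFin0 X πo p (fun i : Fin p => y i.1) x0 }

/-- The relation R on Y^ℕ: related iff equal or both in some Γ_n(x_n). -/
def simRel (X : ℕ → Type) (φs : ∀ n, X n → X (n + 1)) (πo : ∀ n, Y → X n → X (n + 1)) :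
    (ℕ → Y) → (ℕ → Y) → Prop :=
  fun a b => a = b ∨ ∃ n, ∃ xn : X n, a ∈ Gamma X φs πo n xn ∧ b ∈ Gamma X φs πo n xn

variable {X : ℕ → Type}
  [TopologicalSpace Y] [CompactSpace Y] [T2Space Y]
  [∀ n, TopologicalSpace (X n)] [∀ n, CompactSpace (X n)] [∀ n, T2Space (X n)]

section Aux

variable (φs : ∀ n, X n → X (n + 1)) (πo : ∀ n, Y → X n → X (n + 1))

/-- Membership in the cell determined by the first `p` letters of `z`. -/
def cellMem (p : ℕ) (z : ℕ → Y) (A : X p) : Prop :=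
  ∃ b : X 0, A = piFin0 X πo p (fun i : Fin p => z i.1) b

lemma phiTo_self {n : ℕ} (h : n ≤ n) (x : X n) : phiTo X φs h x = x :=
  Nat.leRecOn_self x

lemma phiTo_succ {m n : ℕ} (h1 : m ≤ n) (h2 : m ≤ n + 1) (x : X m) :
    phiTo X φs h2 x = φs n (phiTo X φs h1 x) :=
  Nat.leRecOn_succ h1 x

lemma phiTo_trans {a b c : ℕ} (h1 : a ≤ b) (h2 : b ≤ c) (h3 : a ≤ c) (x : X a) :
    phiTo X φs h3 x = phiTo X φs h2 (phiTo X φs h1 x) :=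
  Nat.leRecOn_trans h1 h2 x

lemma phiTo_inj (hφi : ∀ n, Function.Injective (φs n)) {m n : ℕ} (h : m ≤ n) :
    Function.Injective (phiTo X φs h) :=
  Nat.leRecOn_injective h _ hφi

lemma phiTo_cont (hφc : ∀ n, Continuous (φs n)) {m n : ℕ} (h : m ≤ n) :
    Continuous (phiTo X φs h) := by
  induction h with
  | refl =>
    have : phiTo X φs (Nat.le_refl m) = fun x : X m => x :=
      funext fun x => phiTo_self φs _ x
    rw [this]; exact continuous_id
  | @step k h ih =>
    have : phiTo X φs (Nat.le_succ_of_le h) = fun x : X m => φs k (phiTo X φs h x) :=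
      funext fun x => phiTo_succ φs h _ x
    rw [this]; exact (hφc k).comp ih

lemma piFin0_cont (hπc : ∀ n, Continuous fun p : Y × X n => πo n p.1 p.2) :
    ∀ (p : ℕ) (w : Fin p → Y), Continuous (fun x : X 0 => piFin0 X πo p w x)
  | 0, _ => continuous_id
  | (p + 1), w => by
    show Continuous fun x : X 0 => πo p (w 0) (piFin0 X πo p (fun i => w i.succ) x)
    exact (hπc p).comp (continuous_const.prodMk (piFin0_cont hπc p _))

lemma piFin0_seq_succ (p : ℕ) (z : ℕ → Y) (b : X 0) :
    piFin0 X πo (p + 1) (fun i : Fin (p + 1) => z i.1) b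
      = πo p (z 0) (piFin0 X πo p (fun i : Fin p => z (i.1 + 1)) b) := rfl

/-- Commuting φ past π : φ_{p+1,q+1}(π_q(y,ξ)) = π_p(y, φ_{p,q} ξ). -/
lemma phiPi (hcomm : ∀ (n : ℕ) (y : Y) (x : X n), πo (n + 1) y (φs n x) = φs (n + 1) (πo n y x))
    {q p : ℕ} (h : q ≤ p) (y : Y) (ξ : X q) :
    phiTo X φs (Nat.succ_le_succ h) (πo q y ξ) = πo p y (phiTo X φs h ξ) := by
  induction h with
  | refl => rw [phiTo_self, phiTo_self]
  | @step k h ih =>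
    rw [phiTo_succ φs (Nat.succ_le_succ h), ih,
      phiTo_succ φs h (Nat.le_succ_of_le h), hcomm]

/-- Downward closure of cell membership: if `φs p A` lies in the `(p+1)`-cell of `z`,
then `A` lies in the `p`-cell of `z`. -/
lemma cellDown (hφi : ∀ n, Function.Injective (φs n))
    (hπs : ∀ n, Function.Surjective fun p : Y × X n => πo n p.1 p.2)
    (hcomm : ∀ (n : ℕ) (y : Y) (x : X n), πo (n + 1) y (φs n x) = φs (n + 1) (πo n y x))
    (hquot : ∀ (n : ℕ) (y y' : Y) (ξ ξ' : X n), πo n y ξ = πo n y' ξ' → (y, ξ) ≠ (y', ξ') →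
      ∃ x0 x0' : X 0, ξ = phiTo X φs (Nat.zero_le n) x0 ∧ ξ' = phiTo X φs (Nat.zero_le n) x0' ∧
        πo 0 y x0 = πo 0 y' x0') :
    ∀ (p : ℕ) (z : ℕ → Y) (A : X p), cellMem πo (p + 1) z (φs p A) → cellMem πo p z A := by
  intro p
  induction p with
  | zero => intro z A _; exact ⟨A, rfl⟩
  | succ q IH =>
    intro z A hA
    obtain ⟨⟨e, E⟩, hE⟩ := hπs q A
    replace hE : πo q e E = A := hE
    obtain ⟨b, hb⟩ := hA
    rw [piFin0_seq_succ] at hb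
    set C := piFin0 X πo (q + 1) (fun i : Fin (q + 1) => z (i.1 + 1)) b with hCdef
    have key : πo (q + 1) e (φs q E) = πo (q + 1) (z 0) C := by
      rw [hcomm, hE]; exact hb
    by_cases hc : (e, φs q E) = ((z 0), C)
    · rw [Prod.mk.injEq] at hc
      obtain ⟨he, hEC⟩ := hc
      obtain ⟨b', hb'⟩ := IH (fun k => z (k + 1)) E ⟨b, hEC⟩
      refine ⟨b', ?_⟩
      rw [piFin0_seq_succ, ← hE, he, hb']
    · obtain ⟨c, c', hEc, hCc', hcc'⟩ := hquot (q + 1) e (z 0) (φs q E) C key hc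
      have hE0 : E = phiTo X φs (Nat.zero_le q) c := by
        apply hφi q
        rw [← phiTo_succ φs (Nat.zero_le q) (Nat.zero_le (q + 1))]
        exact hEc
      have hCcell : cellMem πo q (fun k => z (k + 1)) (phiTo X φs (Nat.zero_le q) c') := by
        apply IH
        refine ⟨b, ?_⟩
        rw [← phiTo_succ φs (Nat.zero_le q) (Nat.zero_le (q + 1)), ← hCc']
      obtain ⟨b'', hb''⟩ := hCcell
      refine ⟨b'', ?_⟩
      rw [piFin0_seq_succ, ← hb'', ← hE, hE0,
        ← phiPi φs πo hcomm (Nat.zero_le q) e c, ← phiPi φs πo hcomm (Nat.zero_le q) (z 0) c',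
        hcc']
end Aux

section Aux2

variable (φs : ∀ n, X n → X (n + 1)) (πo : ∀ n, Y → X n → X (n + 1))
  (hφc : ∀ n, Continuous (φs n)) (hφi : ∀ n, Function.Injective (φs n))
  (hπc : ∀ n, Continuous fun p : Y × X n => πo n p.1 p.2)
  (hπs : ∀ n, Function.Surjective fun p : Y × X n => πo n p.1 p.2)
  (hcomm : ∀ (n : ℕ) (y : Y) (x : X n), πo (n + 1) y (φs n x) = φs (n + 1) (πo n y x))
  (hquot : ∀ (n : ℕ) (y y' : Y) (ξ ξ' : X n), πo n y ξ = πo n y' ξ' → (y, ξ) ≠ (y', ξ') →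
    ∃ x0 x0' : X 0, ξ = phiTo X φs (Nat.zero_le n) x0 ∧ ξ' = phiTo X φs (Nat.zero_le n) x0' ∧
      πo 0 y x0 = πo 0 y' x0')

include hφc hφi hπc hπs hcomm hquot

/-- Decomposition: a point of X (q+1) whose Γ-set contains z splits as π(z 0, ξ) with
the tail of z in Γ_q(ξ). -/
lemma decomp (q : ℕ) (w : X (q + 1)) (z : ℕ → Y) (hz : z ∈ Gamma X φs πo (q + 1) w) :
    ∃ ξ : X q, πo q (z 0) ξ = w ∧ (fun k => z (k + 1)) ∈ Gamma X φs πo q ξ := by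
  set S : ℕ → Set (X q) := fun j =>
    {ξ | πo q (z 0) ξ = w ∧
      cellMem πo (q + j) (fun k => z (k + 1)) (phiTo X φs (Nat.le_add_right q j) ξ)} with hS
  have hdec : ∀ j, S (j + 1) ⊆ S j := by
    intro j ξ hξ
    obtain ⟨h1, h2⟩ := hξ
    refine ⟨h1, ?_⟩
    apply cellDown φs πo hφi hπs hcomm hquot
    rw [← phiTo_succ φs (Nat.le_add_right q j)]
    exact h2
  have hne : ∀ j, (S j).Nonempty := by
    intro j
    obtain ⟨a, ha⟩ := hz (q + 1) (le_refl _)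
    rw [phiTo_self, piFin0_seq_succ] at ha
    set ξ0 := piFin0 X πo q (fun i : Fin q => z (i.1 + 1)) a with hξ0def
    obtain ⟨b, hbv⟩ := hz (q + j + 1) (by omega)
    rw [piFin0_seq_succ] at hbv
    set C := piFin0 X πo (q + j) (fun i : Fin (q + j) => z (i.1 + 1)) b with hCdef
    have key : πo (q + j) (z 0) (phiTo X φs (Nat.le_add_right q j) ξ0)
        = πo (q + j) (z 0) C := by
      rw [← phiPi φs πo hcomm (Nat.le_add_right q j) (z 0) ξ0, ← ha]
      exact hbv
    by_cases hc : ((z 0), phiTo X φs (Nat.le_add_right q j) ξ0) = ((z 0), C)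
    · rw [Prod.mk.injEq] at hc
      exact ⟨ξ0, ha.symm, ⟨b, hc.2⟩⟩
    · obtain ⟨c, c', h1, h2, h3⟩ := hquot (q + j) (z 0) (z 0) _ C key hc
      have hξ0c : ξ0 = phiTo X φs (Nat.zero_le q) c := by
        apply phiTo_inj φs hφi (Nat.le_add_right q j)
        rw [h1, phiTo_trans φs (Nat.zero_le q) (Nat.le_add_right q j)]
      refine ⟨phiTo X φs (Nat.zero_le q) c', ?_, ?_⟩
      · rw [← phiPi φs πo hcomm (Nat.zero_le q) (z 0) c', ← h3,
          phiPi φs πo hcomm (Nat.zero_le q) (z 0) c, ← hξ0c]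
        exact ha.symm
      · refine ⟨b, ?_⟩
        rw [← phiTo_trans φs (Nat.zero_le q) (Nat.le_add_right q j) (Nat.zero_le (q + j)),
          ← h2]
  have hclosed : ∀ j, IsClosed (S j) := by
    intro j
    have e1 : IsClosed {ξ : X q | πo q (z 0) ξ = w} := by
      have hco : Continuous fun ξ : X q => πo q (z 0) ξ :=
        (hπc q).comp (continuous_const.prodMk continuous_id)
      exact isClosed_singleton.preimage hco
    have e2 : IsClosed {ξ : X q |
        cellMem πo (q + j) (fun k => z (k + 1)) (phiTo X φs (Nat.le_add_right q j) ξ)} := by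
      have hcell : IsCompact (Set.range
          (fun x : X 0 => piFin0 X πo (q + j) (fun i : Fin (q + j) => z (i.1 + 1)) x)) :=
        isCompact_range (piFin0_cont πo hπc (q + j) _)
      have hcc : IsClosed (Set.range
          (fun x : X 0 => piFin0 X πo (q + j) (fun i : Fin (q + j) => z (i.1 + 1)) x)) :=
        hcell.isClosed
      have : {ξ : X q |
          cellMem πo (q + j) (fun k => z (k + 1)) (phiTo X φs (Nat.le_add_right q j) ξ)}
          = (phiTo X φs (Nat.le_add_right q j)) ⁻¹' (Set.range
            (fun x : X 0 => piFin0 X πo (q + j) (fun i : Fin (q + j) => z (i.1 + 1)) x)) := by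
        ext ξ
        constructor
        · rintro ⟨b, hb⟩; exact ⟨b, hb.symm⟩
        · rintro ⟨b, hb⟩; exact ⟨b, hb.symm⟩
      rw [this]
      exact hcc.preimage (phiTo_cont φs hφc _)
    have : S j = {ξ : X q | πo q (z 0) ξ = w} ∩ {ξ : X q |
        cellMem πo (q + j) (fun k => z (k + 1)) (phiTo X φs (Nat.le_add_right q j) ξ)} := rfl
    rw [this]
    exact e1.inter e2
  obtain ⟨ξ, hξ⟩ := IsCompact.nonempty_iInter_of_sequence_nonempty_isCompact_isClosed
    S hdec hne ((hclosed 0).isCompact) hclosed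
  simp only [Set.mem_iInter] at hξ
  refine ⟨ξ, (hξ 0).1, ?_⟩
  intro p hp
  obtain ⟨j, rfl⟩ : ∃ j, p = q + j := ⟨p - q, by omega⟩
  exact (hξ j).2

/-- No two distinct points of X m have intersecting Γ-sets (given h0). -/
lemma gammaInj
    (h0 : ∀ (x x' : X 0) (y y' : ℕ → Y),
      y ∈ Gamma X φs πo 0 x → y' ∈ Gamma X φs πo 0 x' →
      Quot.mk (simRel X φs πo) y = Quot.mk (simRel X φs πo) y' → x = x') :
    ∀ (m : ℕ) (w w' : X m) (z : ℕ → Y),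
      z ∈ Gamma X φs πo m w → z ∈ Gamma X φs πo m w' → w = w' := by
  intro m
  induction m with
  | zero => intro w w' z hw hw'; exact h0 w w' z z hw hw' rfl
  | succ q IH =>
    intro w w' z hw hw'
    obtain ⟨ξ, hξw, hξ⟩ := decomp φs πo hφc hφi hπc hπs hcomm hquot q w z hw
    obtain ⟨ξ', hξw', hξ'⟩ := decomp φs πo hφc hφi hπc hπs hcomm hquot q w' z hw'
    rw [← hξw, ← hξw', IH ξ ξ' _ hξ hξ']

lemma gammaUp {n M : ℕ} (h : n ≤ M) {x : X n} {y : ℕ → Y}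
    (hy : y ∈ Gamma X φs πo n x) : y ∈ Gamma X φs πo M (phiTo X φs h x) := by
  intro p hp
  obtain ⟨b, hb⟩ := hy p (h.trans hp)
  refine ⟨b, ?_⟩
  rw [← phiTo_trans φs h hp (h.trans hp)]
  exact hb

lemma cellDownIter :
    ∀ (j p : ℕ) (z : ℕ → Y) (A : X p),
      cellMem πo (p + j) z (phiTo X φs (Nat.le_add_right p j) A) → cellMem πo p z A := by
  intro j
  induction j with
  | zero =>
    intro p z A h
    rwa [phiTo_self] at h
  | succ j IH =>
    intro p z A h
    apply IH p z A
    apply cellDown φs πo hφi hπs hcomm hquot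
    rw [← phiTo_succ φs (Nat.le_add_right p j)]
    exact h

lemma gammaDown {n M : ℕ} (h : n ≤ M) {x : X n} {y : ℕ → Y}
    (hy : y ∈ Gamma X φs πo M (phiTo X φs h x)) : y ∈ Gamma X φs πo n x := by
  intro p hp
  rcases le_or_gt M p with hMp | hpM
  · obtain ⟨b, hb⟩ := hy p hMp
    refine ⟨b, ?_⟩
    rw [phiTo_trans φs h hMp hp]
    exact hb
  · obtain ⟨j, rfl⟩ : ∃ j, M = p + j := ⟨M - p, by omega⟩
    have hcell := hy (p + j) (le_refl _)
    rw [phiTo_self] at hcell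
    apply cellDownIter φs πo hφc hφi hπc hπs hcomm hquot j p y (phiTo X φs hp x)
    rw [← phiTo_trans φs hp (Nat.le_add_right p j) h]
    exact hcell

lemma stepTransfer
    (h0 : ∀ (x x' : X 0) (y y' : ℕ → Y),
      y ∈ Gamma X φs πo 0 x → y' ∈ Gamma X φs πo 0 x' →
      Quot.mk (simRel X φs πo) y = Quot.mk (simRel X φs πo) y' → x = x')
    {a b : ℕ → Y} {k : ℕ} {ξ : X k}
    (ha : a ∈ Gamma X φs πo k ξ) (hb : b ∈ Gamma X φs πo k ξ)
    {N : ℕ} {u : X N} (hau : a ∈ Gamma X φs πo N u) : b ∈ Gamma X φs πo N u := by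
  have h1 := gammaUp φs πo hφc hφi hπc hπs hcomm hquot (le_max_left N k) hau
  have h2 := gammaUp φs πo hφc hφi hπc hπs hcomm hquot (le_max_right N k) ha
  have heq := gammaInj φs πo hφc hφi hπc hπs hcomm hquot h0 (max N k) _ _ a h2 h1
  have hb2 := gammaUp φs πo hφc hφi hπc hπs hcomm hquot (le_max_right N k) hb
  rw [heq] at hb2
  exact gammaDown φs πo hφc hφi hπc hπs hcomm hquot (le_max_left N k) hb2

lemma transfer
    (h0 : ∀ (x x' : X 0) (y y' : ℕ → Y),
      y ∈ Gamma X φs πo 0 x → y' ∈ Gamma X φs πo 0 x' →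
      Quot.mk (simRel X φs πo) y = Quot.mk (simRel X φs πo) y' → x = x')
    {a b : ℕ → Y} (hab : Relation.EqvGen (simRel X φs πo) a b) :
    ∀ (N : ℕ) (u : X N), a ∈ Gamma X φs πo N u ↔ b ∈ Gamma X φs πo N u := by
  induction hab with
  | rel a b h =>
    intro N u
    rcases h with rfl | ⟨k, ξ, ha, hb⟩
    · exact Iff.rfl
    · constructor
      · exact fun hau => stepTransfer φs πo hφc hφi hπc hπs hcomm hquot h0 ha hb hau
      · exact fun hbu => stepTransfer φs πo hφc hφi hπc hπs hcomm hquot h0 hb ha hbu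
  | refl a => exact fun N u => Iff.rfl
  | symm a b _ ih => exact fun N u => (ih N u).symm
  | trans a b c _ _ ih1 ih2 => exact fun N u => (ih1 N u).trans (ih2 N u)

end Aux2

theorem statement_18
    (φs : ∀ n, X n → X (n + 1)) (πo : ∀ n, Y → X n → X (n + 1))
    (hφc : ∀ n, Continuous (φs n)) (hφi : ∀ n, Function.Injective (φs n))
    (hπc : ∀ n, Continuous fun p : Y × X n => πo n p.1 p.2)
    (hπs : ∀ n, Function.Surjective fun p : Y × X n => πo n p.1 p.2)
    (hcomm : ∀ (n : ℕ) (y : Y) (x : X n), πo (n + 1) y (φs n x) = φs (n + 1) (πo n y x))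
    (hquot : ∀ (n : ℕ) (y y' : Y) (ξ ξ' : X n), πo n y ξ = πo n y' ξ' → (y, ξ) ≠ (y', ξ') →
      ∃ x0 x0' : X 0, ξ = phiTo X φs (Nat.zero_le n) x0 ∧ ξ' = phiTo X φs (Nat.zero_le n) x0' ∧
        πo 0 y x0 = πo 0 y' x0')
    (h0 : ∀ (x x' : X 0) (y y' : ℕ → Y),
      y ∈ Gamma X φs πo 0 x → y' ∈ Gamma X φs πo 0 x' →
      Quot.mk (simRel X φs πo) y = Quot.mk (simRel X φs πo) y' → x = x') :
    ∀ (n : ℕ) (xn xn' : X n) (y y' : ℕ → Y),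
      y ∈ Gamma X φs πo n xn → y' ∈ Gamma X φs πo n xn' →
      Quot.mk (simRel X φs πo) y = Quot.mk (simRel X φs πo) y' → xn = xn' := by
  intro n xn xn' y y' hy hy' hq
  have heqv : Relation.EqvGen (simRel X φs πo) y y' := Quot.eq.mp hq
  have hy'' : y' ∈ Gamma X φs πo n xn :=
    (transfer φs πo hφc hφi hπc hπs hcomm hquot h0 heqv n xn).mp hy
  exact gammaInj φs πo hφc hφi hπc hπs hcomm hquot h0 n xn xn' y' hy'' hy'
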